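/- If the Chowla–Walum conjecture holds for (α, j) = (1, 1), i.e., Σ_{d ≤ √x} d·ψ(x/d) ≪_ε x^{3/4+ε} for all ε > 0, then for x → ∞ and all ε ∈ (0,1/2]: Σ_{n ≤ x} σ̃_1(n) = (2/3) x^{3/2} - (1/4) x + O(x^{3/4 + ε}), where σ̃_1(n) = Σ_{d ∣ n, d² ≤ n} d. -/

import Mathlib

open Filter

noncomputable def psi (t : ℝ) : ℝ := t - (⌊t⌋ : ℝ) - 1 / 2

lemma div_filter_eq (K n : ℕ) (hn : n ∈ Finset.Icc 1 K) :
    n.divisors.filter (fun d => d ^ 2 ≤ n)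
      = (Finset.Icc 1 K).filter (fun d => d ∣ n ∧ d ^ 2 ≤ n) := by
  simp only [Finset.mem_Icc] at hn
  ext d
  simp only [Finset.mem_filter, Nat.mem_divisors, Finset.mem_Icc]
  constructor
  · rintro ⟨⟨hd, hn0⟩, h2⟩
    exact ⟨⟨Nat.pos_of_dvd_of_pos hd (by omega), le_trans (Nat.le_of_dvd (by omega) hd) hn.2⟩, hd, h2⟩
  · rintro ⟨_, hd, h2⟩
    exact ⟨⟨hd, by omega⟩, h2⟩

lemma card_eq (K d : ℕ) (hd : 1 ≤ d) :
    ((Finset.Icc 1 K).filter (fun n => d ∣ n ∧ d ^ 2 ≤ n)).card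
      = (Finset.Icc d (K / d)).card := by
  apply Finset.card_bij' (fun n _ => n / d) (fun m _ => d * m)
  · intro n hn
    simp only [Finset.mem_filter, Finset.mem_Icc] at hn ⊢
    obtain ⟨⟨h1, h2⟩, hdvd, hsq⟩ := hn
    constructor
    · rw [Nat.le_div_iff_mul_le (by omega)]
      nlinarith [hsq]
    · exact Nat.div_le_div_right h2
  · intro m hm
    simp only [Finset.mem_Icc] at hm
    simp only [Finset.mem_filter, Finset.mem_Icc]
    refine ⟨⟨by nlinarith [hm.1], ?_⟩, ⟨m, rfl⟩, by nlinarith [hm.1]⟩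
    calc d * m ≤ d * (K / d) := Nat.mul_le_mul_left d hm.2
    _ ≤ K := Nat.mul_div_le K d
  · intro n hn
    simp only [Finset.mem_filter] at hn
    exact Nat.mul_div_cancel' hn.2.1
  · intro m hm
    exact Nat.mul_div_cancel_left m (by omega)

lemma swap (K : ℕ) :
    ∑ n ∈ Finset.Icc 1 K, ∑ d ∈ n.divisors.filter (fun d => d ^ 2 ≤ n), (d : ℝ)
      = ∑ d ∈ Finset.Icc 1 (Nat.sqrt K), (d : ℝ) * ((Finset.Icc d (K / d)).card : ℝ) := by
  have step1 : ∑ n ∈ Finset.Icc 1 K, ∑ d ∈ n.divisors.filter (fun d => d ^ 2 ≤ n), (d : ℝ)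
      = ∑ d ∈ Finset.Icc 1 K, ∑ n ∈ Finset.Icc 1 K,
          if d ∣ n ∧ d ^ 2 ≤ n then (d : ℝ) else 0 := by
    rw [Finset.sum_comm]
    exact Finset.sum_congr rfl fun n hn => by
      rw [div_filter_eq K n hn, Finset.sum_filter]
  rw [step1]
  rw [← Finset.sum_subset (Finset.Icc_subset_Icc_right (Nat.sqrt_le_self K))]
  · apply Finset.sum_congr rfl
    intro d hd
    simp only [Finset.mem_Icc] at hd
    rw [← Finset.sum_filter, Finset.sum_const, nsmul_eq_mul, card_eq K d hd.1, mul_comm]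
  · intro d hd hd'
    simp only [Finset.mem_Icc] at hd hd'
    apply Finset.sum_eq_zero
    intro n hn
    simp only [Finset.mem_Icc] at hn
    rw [if_neg]
    rintro ⟨-, hsq⟩
    have : d ≤ Nat.sqrt K := Nat.le_sqrt.mpr (by nlinarith [hn.2])
    omega

lemma gauss1 (N : ℕ) : ∑ d ∈ Finset.Icc 1 N, (d : ℝ) = N * (N + 1) / 2 := by
  induction N with
  | zero => simp
  | succ n ih =>
    rw [Finset.sum_Icc_succ_top (by omega), ih]
    push_cast; ring

lemma gauss2 (N : ℕ) : ∑ d ∈ Finset.Icc 1 N, (d : ℝ) ^ 2 = N * (N + 1) * (2 * N + 1) / 6 := by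
  induction N with
  | zero => simp
  | succ n ih =>
    rw [Finset.sum_Icc_succ_top (by omega), ih]
    push_cast; ring

lemma floor_sqrt_eq (x : ℝ) (hx : 1 ≤ x) : ⌊Real.sqrt x⌋₊ = Nat.sqrt ⌊x⌋₊ := by
  have hx0 : (0:ℝ) ≤ x := by linarith
  set N := Nat.sqrt ⌊x⌋₊ with hN
  rw [Nat.floor_eq_iff (Real.sqrt_nonneg x)]
  constructor
  · apply Real.le_sqrt_of_sq_le
    have h1 : N ^ 2 ≤ ⌊x⌋₊ := Nat.sqrt_le' ⌊x⌋₊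
    have h1' : ((N^2 : ℕ) : ℝ) ≤ (⌊x⌋₊ : ℝ) := Nat.cast_le.mpr h1
    have h2 : ((⌊x⌋₊ : ℕ) : ℝ) ≤ x := Nat.floor_le hx0
    push_cast at h1'
    nlinarith
  · have h1 : ⌊x⌋₊ < (N + 1) ^ 2 := Nat.lt_succ_sqrt' ⌊x⌋₊
    have h2 : x < (⌊x⌋₊ : ℝ) + 1 := Nat.lt_floor_add_one x
    have h3 : ((⌊x⌋₊ : ℕ) : ℝ) + 1 ≤ ((N:ℝ) + 1) * ((N:ℝ) + 1) := by
      have := Nat.cast_le (α := ℝ) |>.mpr (Nat.succ_le_of_lt h1)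
      push_cast at this; linarith
    have : x < ((N:ℝ) + 1) * ((N:ℝ) + 1) := lt_of_lt_of_le h2 h3
    nlinarith [Real.sq_sqrt hx0, Real.sqrt_nonneg x]

lemma main_eq (x : ℝ) (hx : 1 ≤ x) :
    (∑ n ∈ Finset.Icc 1 ⌊x⌋₊,
        ∑ d ∈ n.divisors.filter (fun d => d ^ 2 ≤ n), (d : ℝ))
      = (⌊Real.sqrt x⌋₊ : ℝ) * x
          - (∑ d ∈ Finset.Icc 1 ⌊Real.sqrt x⌋₊, (d : ℝ) * psi (x / (d : ℝ)))
          + (⌊Real.sqrt x⌋₊ : ℝ) * ((⌊Real.sqrt x⌋₊ : ℝ) + 1) / 4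
          - (⌊Real.sqrt x⌋₊ : ℝ) * ((⌊Real.sqrt x⌋₊ : ℝ) + 1) * (2 * (⌊Real.sqrt x⌋₊ : ℝ) + 1) / 6 := by
  have hx0 : (0:ℝ) ≤ x := by linarith
  rw [swap, ← floor_sqrt_eq x hx]
  set N := ⌊Real.sqrt x⌋₊ with hNdef
  have key : ∀ d ∈ Finset.Icc 1 N, (d : ℝ) * ((Finset.Icc d (⌊x⌋₊ / d)).card : ℝ)
      = x - (d : ℝ) * psi (x / (d : ℝ)) + (d : ℝ) / 2 - (d : ℝ) ^ 2 := by
    intro d hd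
    simp only [Finset.mem_Icc] at hd
    obtain ⟨hd1, hdN⟩ := hd
    have hdd : d * d ≤ ⌊x⌋₊ := by
      have : d ≤ Nat.sqrt ⌊x⌋₊ := by rw [← floor_sqrt_eq x hx]; exact hdN
      have := Nat.le_sqrt'.mp this; nlinarith
    have hdiv : d ≤ ⌊x⌋₊ / d := (Nat.le_div_iff_mul_le (by omega)).mpr hdd
    rw [Nat.card_Icc]
    have hcast : ((⌊x⌋₊ / d + 1 - d : ℕ) : ℝ) = ((⌊x⌋₊ / d : ℕ) : ℝ) + 1 - (d : ℝ) := by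
      have : d ≤ ⌊x⌋₊ / d + 1 := by omega
      push_cast [Nat.cast_sub this]
      ring
    rw [hcast, ← Nat.floor_div_natCast x d]
    have ht0 : (0:ℝ) ≤ x / (d : ℝ) := by positivity
    have hfloor : ((⌊x / (d:ℝ)⌋₊ : ℕ) : ℝ) = ((⌊x / (d:ℝ)⌋ : ℤ) : ℝ) := by
      exact_mod_cast congrArg (fun z : ℤ => (z : ℝ)) (Int.natCast_floor_eq_floor ht0)
    rw [hfloor]
    have hpsi : ((⌊x / (d:ℝ)⌋ : ℤ) : ℝ) = x / d - psi (x / d) - 1 / 2 := by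
      unfold psi; ring
    rw [hpsi]
    have hd0 : (d : ℝ) ≠ 0 := by positivity
    field_simp
    ring
  rw [Finset.sum_congr rfl key]
  rw [Finset.sum_sub_distrib, Finset.sum_add_distrib, Finset.sum_sub_distrib,
    Finset.sum_const, ← Finset.sum_div, gauss1, gauss2, Nat.card_Icc, nsmul_eq_mul]
  have h1 : ((N + 1 - 1 : ℕ) : ℝ) = (N : ℝ) := by push_cast; ring
  rw [h1]
  ring

lemma R_bound (x : ℝ) (hx : 1 ≤ x) :
    |(⌊Real.sqrt x⌋₊ : ℝ) * x
        + (⌊Real.sqrt x⌋₊ : ℝ) * ((⌊Real.sqrt x⌋₊ : ℝ) + 1) / 4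
        - (⌊Real.sqrt x⌋₊ : ℝ) * ((⌊Real.sqrt x⌋₊ : ℝ) + 1) * (2 * (⌊Real.sqrt x⌋₊ : ℝ) + 1) / 6
        - (2 / 3) * x ^ ((3 : ℝ) / 2) + (1 / 4) * x|
      ≤ 2 * x ^ ((1 : ℝ) / 2) := by
  have hx0 : (0:ℝ) ≤ x := by linarith
  set u := Real.sqrt x with hu
  set n := ((⌊Real.sqrt x⌋₊ : ℕ) : ℝ) with hn
  have hu1 : 1 ≤ u := by
    rw [hu, show (1:ℝ) = Real.sqrt 1 by simp]
    exact Real.sqrt_le_sqrt hx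
  have hxu : x = u ^ 2 := (Real.sq_sqrt hx0).symm
  have h12 : x ^ ((1:ℝ)/2) = u := by
    rw [hu, Real.sqrt_eq_rpow]
  have h32 : x ^ ((3:ℝ)/2) = u ^ 3 := by
    rw [show ((3:ℝ)/2) = (1/2) * (3:ℕ) by norm_num, Real.rpow_mul hx0,
      Real.rpow_natCast, ← Real.sqrt_eq_rpow]
  have hnu : n ≤ u := Nat.floor_le (Real.sqrt_nonneg x)
  have hun : u < n + 1 := Nat.lt_floor_add_one u
  have hn0 : (0:ℝ) ≤ n := Nat.cast_nonneg _
  rw [h12, h32, hxu, abs_le]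
  constructor
  · nlinarith [sq_nonneg (u - n), sq_nonneg (u - n - 1/4), mul_nonneg (sub_nonneg.mpr hnu) hn0,
      mul_nonneg (le_trans zero_le_one hu1) (sq_nonneg (u - n)), sq_nonneg (n + 1 - u)]
  · nlinarith [sq_nonneg (u - n), sq_nonneg (u - n - 1/4), mul_nonneg (sub_nonneg.mpr hnu) hn0,
      mul_nonneg (le_trans zero_le_one hu1) (sq_nonneg (u - n - 1/4)),
      mul_nonneg (sub_nonneg.mpr hnu) (sub_nonneg.mpr hnu), sq_nonneg (n + 1 - u)]

theorem stmt_17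
    (h : ∀ ε : ℝ, 0 < ε →
      (fun x : ℝ =>
          ∑ d ∈ Finset.Icc 1 ⌊Real.sqrt x⌋₊, (d : ℝ) * psi (x / (d : ℝ))) =O[atTop]
        fun x : ℝ => x ^ ((3 : ℝ) / 4 + ε)) :
    ∀ ε : ℝ, 0 < ε → ε ≤ 1 / 2 →
      (fun x : ℝ =>
          (∑ n ∈ Finset.Icc 1 ⌊x⌋₊,
              ∑ d ∈ n.divisors.filter (fun d => d ^ 2 ≤ n), (d : ℝ)) -
            ((2 / 3) * x ^ ((3 : ℝ) / 2) - (1 / 4) * x)) =O[atTop]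
        fun x : ℝ => x ^ ((3 : ℝ) / 4 + ε) := by
  intro ε hε hε2
  have hS := h ε hε
  have hR : (fun x : ℝ => (⌊Real.sqrt x⌋₊ : ℝ) * x
        + (⌊Real.sqrt x⌋₊ : ℝ) * ((⌊Real.sqrt x⌋₊ : ℝ) + 1) / 4
        - (⌊Real.sqrt x⌋₊ : ℝ) * ((⌊Real.sqrt x⌋₊ : ℝ) + 1) * (2 * (⌊Real.sqrt x⌋₊ : ℝ) + 1) / 6
        - (2 / 3) * x ^ ((3 : ℝ) / 2) + (1 / 4) * x) =O[atTop]
      fun x : ℝ => x ^ ((3 : ℝ) / 4 + ε) := by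
    rw [Asymptotics.isBigO_iff]
    refine ⟨2, ?_⟩
    filter_upwards [eventually_ge_atTop (1:ℝ)] with x hx
    have hb := R_bound x hx
    have h1 : x ^ ((1:ℝ)/2) ≤ x ^ ((3:ℝ)/4 + ε) :=
      Real.rpow_le_rpow_of_exponent_le hx (by linarith)
    have h2 : ‖x ^ ((3:ℝ)/4 + ε)‖ = x ^ ((3:ℝ)/4 + ε) := by
      rw [Real.norm_eq_abs, abs_of_nonneg (Real.rpow_nonneg (by linarith) _)]
    rw [Real.norm_eq_abs, h2]
    calc |_| ≤ 2 * x ^ ((1:ℝ)/2) := hb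
    _ ≤ 2 * x ^ ((3:ℝ)/4 + ε) := by linarith
  have heq : (fun x : ℝ => ((⌊Real.sqrt x⌋₊ : ℝ) * x
        + (⌊Real.sqrt x⌋₊ : ℝ) * ((⌊Real.sqrt x⌋₊ : ℝ) + 1) / 4
        - (⌊Real.sqrt x⌋₊ : ℝ) * ((⌊Real.sqrt x⌋₊ : ℝ) + 1) * (2 * (⌊Real.sqrt x⌋₊ : ℝ) + 1) / 6
        - (2 / 3) * x ^ ((3 : ℝ) / 2) + (1 / 4) * x)
        - (∑ d ∈ Finset.Icc 1 ⌊Real.sqrt x⌋₊, (d : ℝ) * psi (x / (d : ℝ))))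
      =ᶠ[atTop] (fun x : ℝ =>
          (∑ n ∈ Finset.Icc 1 ⌊x⌋₊,
              ∑ d ∈ n.divisors.filter (fun d => d ^ 2 ≤ n), (d : ℝ)) -
            ((2 / 3) * x ^ ((3 : ℝ) / 2) - (1 / 4) * x)) := by
    filter_upwards [eventually_ge_atTop (1:ℝ)] with x hx
    rw [main_eq x hx]
    ring
  exact (hR.sub hS).congr' heq EventuallyEq.rfl
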